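/- Let a, b > 0, ν ∈ (0,1), n ≥ 1, h = b/a, K(t) = (1+t)²/(4t), m_k = ⌊2^k ν⌋, r₀ = min{ν, 1-ν}, r_k = min{2 r_{k-1}, 1 − 2 r_{k-1}}, R_n = 1 − r_n. Then K(h^{1/2^{n-1}})^{r_n} · (a^(1-ν) b^ν)² ≤ ((1-ν)a + νb)² − r₀²(a−b)² − Σ_{k=1}^{n-1} r_k · [ a^{1 − m_k/2^k} b^{m_k/2^k} − a^{1 − (m_k+1)/2^k} b^{(m_k+1)/2^k} ]² ≤ K(h^{1/2^{n-1}})^{R_n} · (a^(1-ν) b^ν)². -/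

import Mathlib

open Real Finset
noncomputable def Kc (t : ℝ) : ℝ := (1 + t)^2 / (4 * t)
lemma bern {x p : ℝ} (hx : 0 ≤ x) (hp0 : 0 ≤ p) (hp1 : p ≤ 1) :
    x ^ p ≤ 1 + p * (x - 1) := by
  have h := rpow_one_add_le_one_add_mul_self (s := x - 1) (by linarith) hp0 hp1
  simpa using h
lemma Kc_pos {t : ℝ} (ht : 0 < t) : 0 < Kc t := by unfold Kc; positivity

lemma base_hi_half {t μ : ℝ} (ht : 0 < t) (h0 : 0 ≤ μ) (h2 : μ ≤ 1/2) :
    1 - μ + μ * t ≤ Kc t ^ (1 - μ) * t ^ μ := by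
  set u : ℝ := (1 + t) / 2 with hu
  have hu0 : 0 < u := by positivity
  set x : ℝ := u / t with hx
  have hx0 : 0 < x := by positivity
  have hKt : Kc t = u ^ (2:ℝ) / t := by
    rw [show (2:ℝ) = ((2:ℕ):ℝ) by norm_num, rpow_natCast]
    unfold Kc; field_simp; ring
  have key : Kc t ^ (1 - μ) * t ^ μ = u * x ^ (1 - 2 * μ) := by
    have hA : Kc t ^ (1-μ) * t ^ μ = u ^ (2-2*μ) * t ^ (2*μ-1) := by
      calc Kc t ^ (1-μ) * t ^ μ
          = u ^ (2*(1-μ)) / t ^ (1-μ) * t ^ μ := by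
            rw [hKt, div_rpow (by positivity) ht.le, ← rpow_mul hu0.le]
        _ = u ^ (2*(1-μ)) * (t ^ μ * t ^ (-(1-μ))) := by
            rw [rpow_neg ht.le]; field_simp
        _ = u ^ (2-2*μ) * t ^ (2*μ-1) := by
            rw [← rpow_add ht, show (μ + -(1-μ):ℝ) = 2*μ-1 by ring,
              show (2*(1-μ):ℝ) = 2-2*μ by ring]
    have hB : u * x ^ (1-2*μ) = u ^ (2-2*μ) * t ^ (2*μ-1) := by
      calc u * x ^ (1-2*μ)
          = u ^ (1:ℝ) * (u ^ (1-2*μ) * t ^ (-(1-2*μ))) := by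
            rw [hx, div_rpow hu0.le ht.le, rpow_neg ht.le, rpow_one, div_eq_mul_inv]
        _ = (u ^ (1:ℝ) * u ^ (1-2*μ)) * t ^ (2*μ-1) := by
            rw [show (-(1-2*μ):ℝ) = 2*μ-1 by ring]; ring
        _ = u ^ (2-2*μ) * t ^ (2*μ-1) := by
            rw [← rpow_add hu0, show (1+(1-2*μ):ℝ) = 2-2*μ by ring]
    rw [hA, hB]
  rw [key]
  set D : ℝ := (1 - 2*μ) + 2*μ*x with hD
  have hD0 : 0 < D := by
    rcases eq_or_lt_of_le h0 with h | h
    · rw [hD, ← h]; norm_num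
    · have := mul_pos h hx0; rw [hD]; nlinarith
  have hb : x ^ (2*μ) ≤ D := by
    have := bern hx0.le (p := 2*μ) (by linarith) (by linarith)
    rw [hD]; linarith
  have hxp : 0 < x ^ (2*μ) := rpow_pos_of_pos hx0 _
  have hstep : x / D ≤ x ^ (1 - 2*μ) := by
    have hxe : x ^ (1 - 2*μ) = x / x ^ (2*μ) := by
      rw [eq_div_iff hxp.ne', ← rpow_add hx0]; norm_num
    rw [hxe]
    exact div_le_div_of_nonneg_left hx0.le hxp hb
  have hchain : u * (x / D) ≤ u * x ^ (1 - 2*μ) :=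
    mul_le_mul_of_nonneg_left hstep hu0.le
  refine le_trans ?_ hchain
  have hxD : u * (x / D) = u^2 / (t * D) := by
    rw [hx]; field_simp
  rw [hxD, le_div_iff₀ (by positivity)]
  have htD : t * D = (1-μ)*t + μ := by rw [hD, hx]; field_simp; ring
  rw [htD, hu]
  nlinarith [sq_nonneg ((1-2*μ)*(t-1))]
lemma Kc_inv {t : ℝ} (ht : 0 < t) : Kc t⁻¹ = Kc t := by
  unfold Kc
  rw [div_eq_div_iff (by positivity) (by positivity)]
  field_simp
  ring

-- base case, μ ≤ 1/2, lower bound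
lemma base_lo_half {t μ : ℝ} (ht : 0 < t) (h0 : 0 ≤ μ) (h2 : μ ≤ 1/2) :
    Kc t ^ μ * t ^ μ ≤ 1 - μ + μ * t := by
  set u : ℝ := (1 + t) / 2 with hu
  have hu0 : 0 < u := by positivity
  have key : Kc t ^ μ * t ^ μ = u ^ (2 * μ) := by
    rw [← mul_rpow (Kc_pos ht).le ht.le]
    have h1 : Kc t * t = u ^ (2:ℝ) := by
      rw [show (2:ℝ) = ((2:ℕ):ℝ) by norm_num, rpow_natCast]
      unfold Kc; field_simp; ring
    rw [h1, ← rpow_mul hu0.le]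
  rw [key]
  calc u ^ (2 * μ) ≤ 1 + (2 * μ) * (u - 1) := bern hu0.le (by linarith) (by linarith)
    _ = 1 - μ + μ * t := by rw [hu]; ring

lemma rpow_inv_aux {t μ : ℝ} (ht : 0 < t) : t * t⁻¹ ^ (1-μ) = t ^ μ := by
  have hinv : t⁻¹ ^ (1-μ) = t ^ (-(1-μ)) := by rw [inv_rpow ht.le, ← rpow_neg ht.le]
  calc t * t⁻¹ ^ (1-μ) = t ^ (1:ℝ) * t ^ (-(1-μ)) := by rw [hinv, rpow_one]
    _ = t ^ (1 + -(1-μ)) := (rpow_add ht _ _).symm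
    _ = t ^ μ := by norm_num

lemma base_lo {t μ : ℝ} (ht : 0 < t) (h0 : 0 ≤ μ) (h1 : μ ≤ 1) :
    Kc t ^ (min μ (1-μ)) * t ^ μ ≤ 1 - μ + μ * t := by
  rcases le_or_gt μ (1/2) with h | h
  · rw [min_eq_left (by linarith)]
    exact base_lo_half ht h0 h
  · rw [min_eq_right (by linarith)]
    have key := base_lo_half (t := t⁻¹) (μ := 1-μ) (by positivity) (by linarith) (by linarith)
    rw [Kc_inv ht] at key
    have h4 : Kc t ^ (1-μ) * t ^ μ = t * (Kc t ^ (1-μ) * t⁻¹ ^ (1-μ)) := by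
      rw [← rpow_inv_aux (μ := μ) ht]; ring
    have h5 : t * (1 - (1-μ) + (1-μ) * t⁻¹) = 1 - μ + μ * t := by field_simp; ring
    rw [h4, ← h5]
    exact mul_le_mul_of_nonneg_left key ht.le

lemma base_hi {t μ : ℝ} (ht : 0 < t) (h0 : 0 ≤ μ) (h1 : μ ≤ 1) :
    1 - μ + μ * t ≤ Kc t ^ (1 - min μ (1-μ)) * t ^ μ := by
  rcases le_or_gt μ (1/2) with h | h
  · rw [min_eq_left (by linarith)]
    exact base_hi_half ht h0 h
  · rw [min_eq_right (by linarith)]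
    have key := base_hi_half (t := t⁻¹) (μ := 1-μ) (by positivity) (by linarith) (by linarith)
    rw [Kc_inv ht] at key
    have h4 : Kc t ^ (1-(1-μ)) * t ^ μ = t * (Kc t ^ (1-(1-μ)) * t⁻¹ ^ (1-μ)) := by
      rw [← rpow_inv_aux (μ := μ) ht]; ring
    have h5 : t * (1 - (1-μ) + (1-μ) * t⁻¹) = 1 - μ + μ * t := by field_simp; ring
    rw [h4, ← h5]
    exact mul_le_mul_of_nonneg_left key ht.le

noncomputable def rseq (ν : ℝ) : ℕ → ℝ
  | 0 => min ν (1 - ν)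
  | k + 1 => min (2 * rseq ν k) (1 - 2 * rseq ν k)

noncomputable def mfl (ν : ℝ) (k : ℕ) : ℝ := ⌊(2:ℝ)^k * ν⌋

noncomputable def Fk (X Y μ : ℝ) (k : ℕ) : ℝ :=
  X ^ ((1 - mfl μ k / 2^k)/2) * Y ^ ((mfl μ k / 2^k)/2)
  - X ^ ((1 - (mfl μ k + 1) / 2^k)/2) * Y ^ (((mfl μ k + 1) / 2^k)/2)

lemma rseq_zero (μ : ℝ) : rseq μ 0 = min μ (1-μ) := rfl

lemma rseq_succ (μ : ℝ) (k : ℕ) :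
    rseq μ (k+1) = min (2 * rseq μ k) (1 - 2 * rseq μ k) := rfl

lemma rseq_shift {μ μ' : ℝ} (h : rseq μ' 0 = rseq μ 1) : ∀ k, rseq μ' k = rseq μ (k+1)
  | 0 => h
  | (k+1) => by rw [rseq_succ, rseq_succ, rseq_shift h k]

lemma rseq_one_low {μ : ℝ} (h0 : 0 ≤ μ) (h2 : μ ≤ 1/2) : rseq (2*μ) 0 = rseq μ 1 := by
  have h : rseq μ 0 = μ := min_eq_left (by linarith)
  rw [rseq_zero, rseq_succ, h]

lemma rseq_one_high {μ : ℝ} (h2 : 1/2 ≤ μ) (h1 : μ ≤ 1) : rseq (2*μ-1) 0 = rseq μ 1 := by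
  have h : rseq μ 0 = 1 - μ := min_eq_right (by linarith)
  rw [rseq_zero, rseq_succ, h, min_comm]
  congr 1 <;> ring

lemma mfl_low (μ : ℝ) (k : ℕ) : mfl (2*μ) k = mfl μ (k+1) := by
  unfold mfl
  have h : (2:ℝ)^k * (2*μ) = (2:ℝ)^(k+1) * μ := by ring
  rw [h]

lemma mfl_high (μ : ℝ) (k : ℕ) : mfl (2*μ-1) k = mfl μ (k+1) - 2^k := by
  unfold mfl
  have h1 : (2:ℝ)^k * (2*μ-1) = (2:ℝ)^(k+1) * μ - (((2:ℤ)^k : ℤ) : ℝ) := by push_cast; ring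
  rw [h1, Int.floor_sub_intCast]
  push_cast; ring

lemma mfl_zero {μ : ℝ} (h0 : 0 ≤ μ) (h1 : μ < 1) : mfl μ 0 = 0 := by
  unfold mfl
  norm_num
  exact ⟨h0, h1⟩

lemma hsplit {X Y : ℝ} (hX : 0 < X) (hY : 0 < Y) (q : ℝ) :
    (X ^ ((1:ℝ)/2) * Y ^ ((1:ℝ)/2)) ^ q = X ^ (q/2) * Y ^ (q/2) := by
  rw [mul_rpow (rpow_nonneg hX.le _) (rpow_nonneg hY.le _), ← rpow_mul hX.le,
    ← rpow_mul hY.le]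
  ring_nf

lemma pr_low {X Y : ℝ} (hX : 0 < X) (hY : 0 < Y) (e f : ℝ) :
    X ^ e * (X ^ ((1:ℝ)/2) * Y ^ ((1:ℝ)/2)) ^ f = X ^ (e + f/2) * Y ^ (f/2) := by
  rw [hsplit hX hY, ← mul_assoc, ← rpow_add hX]

lemma pr_high {X Y : ℝ} (hX : 0 < X) (hY : 0 < Y) (e f : ℝ) :
    (X ^ ((1:ℝ)/2) * Y ^ ((1:ℝ)/2)) ^ e * Y ^ f = X ^ (e/2) * Y ^ (e/2 + f) := by
  rw [hsplit hX hY, mul_assoc, ← rpow_add hY]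

lemma sq_half {X : ℝ} (hX : 0 < X) : (X ^ ((1:ℝ)/2))^2 = X := by
  rw [← rpow_natCast (X ^ ((1:ℝ)/2)) 2, ← rpow_mul hX.le]
  norm_num

lemma Fk_low {X Y μ : ℝ} (hX : 0 < X) (hY : 0 < Y) (k : ℕ) :
    Fk X (X ^ ((1:ℝ)/2) * Y ^ ((1:ℝ)/2)) (2*μ) k = Fk X Y μ (k+1) := by
  unfold Fk
  rw [mfl_low, pr_low hX hY, pr_low hX hY]
  have h2k : ((2:ℝ)^k) ≠ 0 := by positivity
  have hk : (2:ℝ)^(k+1) = 2^k * 2 := pow_succ 2 k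
  have E1 : (1 - mfl μ (k+1)/2^k)/2 + ((mfl μ (k+1)/2^k)/2)/2
      = (1 - mfl μ (k+1) / 2^(k+1))/2 := by rw [hk]; field_simp; ring
  have E2 : ((mfl μ (k+1)/2^k)/2)/2 = (mfl μ (k+1) / 2^(k+1))/2 := by
    rw [hk]; field_simp
  have E3 : (1 - (mfl μ (k+1)+1)/2^k)/2 + (((mfl μ (k+1)+1)/2^k)/2)/2
      = (1 - (mfl μ (k+1)+1) / 2^(k+1))/2 := by rw [hk]; field_simp; ring
  have E4 : (((mfl μ (k+1)+1)/2^k)/2)/2 = ((mfl μ (k+1)+1) / 2^(k+1))/2 := by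
    rw [hk]; field_simp
  rw [E1, E2, E3, E4]

lemma Fk_high {X Y μ : ℝ} (hX : 0 < X) (hY : 0 < Y) (k : ℕ) :
    Fk (X ^ ((1:ℝ)/2) * Y ^ ((1:ℝ)/2)) Y (2*μ-1) k = Fk X Y μ (k+1) := by
  unfold Fk
  rw [mfl_high, pr_high hX hY, pr_high hX hY]
  have h2k : ((2:ℝ)^k) ≠ 0 := by positivity
  have hk : (2:ℝ)^(k+1) = 2^k * 2 := pow_succ 2 k
  have E1 : ((1 - (mfl μ (k+1) - 2^k)/2^k)/2)/2 = (1 - mfl μ (k+1) / 2^(k+1))/2 := by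
    rw [hk]; field_simp; ring
  have E2 : ((1 - (mfl μ (k+1) - 2^k)/2^k)/2)/2 + ((mfl μ (k+1) - 2^k)/2^k)/2
      = (mfl μ (k+1) / 2^(k+1))/2 := by rw [hk]; field_simp; ring
  have E3 : ((1 - (mfl μ (k+1) - 2^k + 1)/2^k)/2)/2
      = (1 - (mfl μ (k+1)+1) / 2^(k+1))/2 := by rw [hk]; field_simp; ring
  have E4 : ((1 - (mfl μ (k+1) - 2^k + 1)/2^k)/2)/2 + ((mfl μ (k+1) - 2^k + 1)/2^k)/2
      = ((mfl μ (k+1)+1) / 2^(k+1))/2 := by rw [hk]; field_simp; ring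
  rw [E2, E1, E4, E3]

lemma Fk_zero {X Y μ : ℝ} (h0 : 0 ≤ μ) (h1 : μ < 1) :
    Fk X Y μ 0 = X ^ ((1:ℝ)/2) - Y ^ ((1:ℝ)/2) := by
  unfold Fk
  rw [mfl_zero h0 h1]
  norm_num

lemma mean_low {X Y μ : ℝ} (hX : 0 < X) (hY : 0 < Y) (h0 : 0 ≤ μ) (h2 : μ ≤ 1/2) :
    (1-μ)*X + μ*Y - rseq μ 0 * (Fk X Y μ 0)^2
      = (1-2*μ)*X + (2*μ)*(X ^ ((1:ℝ)/2) * Y ^ ((1:ℝ)/2)) := by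
  have hr : rseq μ 0 = μ := min_eq_left (by linarith)
  rw [Fk_zero h0 (by linarith), hr]
  have hx2 := sq_half hX
  have hy2 := sq_half hY
  linear_combination (-μ)*hx2 + (-μ)*hy2

lemma mean_high {X Y μ : ℝ} (hX : 0 < X) (hY : 0 < Y) (h2 : 1/2 ≤ μ) (h1 : μ ≤ 1) :
    (1-μ)*X + μ*Y - rseq μ 0 * (Fk X Y μ 0)^2
      = (1-(2*μ-1))*(X ^ ((1:ℝ)/2) * Y ^ ((1:ℝ)/2)) + (2*μ-1)*Y := by
  rcases eq_or_lt_of_le h1 with h | h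
  · rw [h, rseq_zero]
    norm_num
  · have hr : rseq μ 0 = 1 - μ := min_eq_right (by linarith)
    rw [Fk_zero (by linarith) h, hr]
    have hx2 := sq_half hX
    have hy2 := sq_half hY
    linear_combination (-(1-μ))*hx2 + (-(1-μ))*hy2

lemma geo_low {X Y μ : ℝ} (hX : 0 < X) (hY : 0 < Y) :
    X ^ (1-2*μ) * (X ^ ((1:ℝ)/2) * Y ^ ((1:ℝ)/2)) ^ (2*μ) = X ^ (1-μ) * Y ^ μ := by
  rw [pr_low hX hY, show (1-2*μ) + (2*μ)/2 = 1-μ by ring, show (2*μ)/2 = μ by ring]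

lemma geo_high {X Y μ : ℝ} (hX : 0 < X) (hY : 0 < Y) :
    (X ^ ((1:ℝ)/2) * Y ^ ((1:ℝ)/2)) ^ (1-(2*μ-1)) * Y ^ (2*μ-1) = X ^ (1-μ) * Y ^ μ := by
  rw [pr_high hX hY, show (1-(2*μ-1))/2 + (2*μ-1) = μ by ring,
    show (1-(2*μ-1))/2 = 1-μ by ring]

lemma ratio_low {X Y : ℝ} (hX : 0 < X) (hY : 0 < Y) :
    (X ^ ((1:ℝ)/2) * Y ^ ((1:ℝ)/2)) / X = (Y/X) ^ ((1:ℝ)/2) := by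
  have hx2 := sq_half hX
  rw [div_rpow hY.le hX.le, div_eq_div_iff hX.ne' (rpow_pos_of_pos hX _).ne']
  linear_combination (Y ^ ((1:ℝ)/2)) * hx2

lemma ratio_high {X Y : ℝ} (hX : 0 < X) (hY : 0 < Y) :
    Y / (X ^ ((1:ℝ)/2) * Y ^ ((1:ℝ)/2)) = (Y/X) ^ ((1:ℝ)/2) := by
  have hy2 := sq_half hY
  have hm : 0 < X ^ ((1:ℝ)/2) * Y ^ ((1:ℝ)/2) := by positivity
  rw [div_rpow hY.le hX.le, div_eq_div_iff hm.ne' (rpow_pos_of_pos hX _).ne']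
  linear_combination (-(X ^ ((1:ℝ)/2))) * hy2

lemma exp_half {z : ℝ} (hz : 0 ≤ z) (N : ℕ) :
    (z ^ ((1:ℝ)/2)) ^ ((1:ℝ)/2^N) = z ^ ((1:ℝ)/2^(N+1)) := by
  rw [← rpow_mul hz]
  congr 1
  have h2N : ((2:ℝ)^N) ≠ 0 := by positivity
  rw [pow_succ]
  field_simp

lemma main (N : ℕ) : ∀ (X Y μ : ℝ), 0 < X → 0 < Y → 0 ≤ μ → μ ≤ 1 →
    (Kc ((Y/X) ^ ((1:ℝ)/2^N)) ^ rseq μ N * (X ^ (1-μ) * Y ^ μ) ≤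
      (1-μ)*X + μ*Y - ∑ k ∈ Finset.range N, rseq μ k * (Fk X Y μ k)^2 ∧
    (1-μ)*X + μ*Y - ∑ k ∈ Finset.range N, rseq μ k * (Fk X Y μ k)^2 ≤
      Kc ((Y/X) ^ ((1:ℝ)/2^N)) ^ (1 - rseq μ N) * (X ^ (1-μ) * Y ^ μ)) := by
  induction N with
  | zero =>
    intro X Y μ hX hY h0 h1
    have ht : 0 < Y/X := by positivity
    have hgeo : X ^ (1-μ) * Y ^ μ = X * (Y/X) ^ μ := by
      have hxx : X ^ (1-μ) = X / X ^ μ := by rw [rpow_sub hX, rpow_one]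
      rw [hxx, div_rpow hY.le hX.le]
      field_simp
    have hmean : (1-μ)*X + μ*Y = X * (1 - μ + μ*(Y/X)) := by field_simp
    simp only [Finset.range_zero, Finset.sum_empty, sub_zero]
    rw [show ((1:ℝ)/2^(0:ℕ)) = 1 by norm_num, rpow_one, rseq_zero, hgeo, hmean]
    constructor
    · have := mul_le_mul_of_nonneg_left (base_lo ht h0 h1) hX.le
      nlinarith [this]
    · have := mul_le_mul_of_nonneg_left (base_hi ht h0 h1) hX.le
      nlinarith [this]
  | succ N IH =>
    intro X Y μ hX hY h0 h1
    rcases le_or_gt μ (1/2) with hc | hc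
    · set Y' := X ^ ((1:ℝ)/2) * Y ^ ((1:ℝ)/2) with hY'
      have hY'0 : 0 < Y' := by positivity
      have hIH := IH X Y' (2*μ) hX hY'0 (by linarith) (by linarith)
      have hshift := rseq_shift (rseq_one_low h0 hc)
      have hKarg : (Y'/X) ^ ((1:ℝ)/2^N) = (Y/X) ^ ((1:ℝ)/2^(N+1)) := by
        rw [hY', ratio_low hX hY, exp_half (by positivity) N]
      have hgeo : X ^ (1-2*μ) * Y' ^ (2*μ) = X ^ (1-μ) * Y ^ μ := by
        rw [hY']; exact geo_low hX hY
      have hsum : (1-2*μ)*X + 2*μ*Y' - ∑ k ∈ Finset.range N, rseq (2*μ) k * (Fk X Y' (2*μ) k)^2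
          = (1-μ)*X + μ*Y - ∑ k ∈ Finset.range (N+1), rseq μ k * (Fk X Y μ k)^2 := by
        rw [Finset.sum_range_succ']
        have hterm : ∀ k, rseq (2*μ) k * (Fk X Y' (2*μ) k)^2
            = rseq μ (k+1) * (Fk X Y μ (k+1))^2 := fun k => by
          rw [hshift k, hY', Fk_low hX hY]
        rw [Finset.sum_congr rfl (fun k _ => hterm k)]
        have hm := mean_low hX hY h0 hc
        rw [hY']
        linarith [hm]
      rw [hKarg, hshift N, hgeo, hsum] at hIH
      exact hIH
    · set X' := X ^ ((1:ℝ)/2) * Y ^ ((1:ℝ)/2) with hX'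
      have hX'0 : 0 < X' := by positivity
      have hIH := IH X' Y (2*μ-1) hX'0 hY (by linarith) (by linarith)
      have hshift := rseq_shift (rseq_one_high hc.le h1)
      have hKarg : (Y/X') ^ ((1:ℝ)/2^N) = (Y/X) ^ ((1:ℝ)/2^(N+1)) := by
        rw [hX', ratio_high hX hY, exp_half (by positivity) N]
      have hgeo : X' ^ (1-(2*μ-1)) * Y ^ (2*μ-1) = X ^ (1-μ) * Y ^ μ := by
        rw [hX']; exact geo_high hX hY
      have hsum : (1-(2*μ-1))*X' + (2*μ-1)*Y
            - ∑ k ∈ Finset.range N, rseq (2*μ-1) k * (Fk X' Y (2*μ-1) k)^2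
          = (1-μ)*X + μ*Y - ∑ k ∈ Finset.range (N+1), rseq μ k * (Fk X Y μ k)^2 := by
        rw [Finset.sum_range_succ']
        have hterm : ∀ k, rseq (2*μ-1) k * (Fk X' Y (2*μ-1) k)^2
            = rseq μ (k+1) * (Fk X Y μ (k+1))^2 := fun k => by
          rw [hshift k, hX', Fk_high hX hY]
        rw [Finset.sum_congr rfl (fun k _ => hterm k)]
        have hm := mean_high hX hY hc.le h1
        rw [hX']
        linarith [hm]
      rw [hKarg, hshift N, hgeo, hsum] at hIH
      exact hIH

lemma inst_low {a b : ℝ} (ha : 0 < a) (hb : 0 < b) (M c : ℝ) (hc : c ≠ 0) :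
    (a*a) ^ ((1 - M/c)/2) * (a*b) ^ ((M/c)/2) = a ^ (1 - M/(c*2)) * b ^ (M/(c*2)) := by
  rw [mul_rpow ha.le ha.le, mul_rpow ha.le hb.le]
  have hre : (a ^ ((1-M/c)/2) * a ^ ((1-M/c)/2)) * (a ^ ((M/c)/2) * b ^ ((M/c)/2))
      = (a ^ ((1-M/c)/2) * a ^ ((1-M/c)/2) * a ^ ((M/c)/2)) * b ^ ((M/c)/2) := by ring
  rw [hre, ← rpow_add ha, ← rpow_add ha]
  have E1 : (1-M/c)/2 + (1-M/c)/2 + (M/c)/2 = 1 - M/(c*2) := by field_simp; ring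
  have E2 : (M/c)/2 = M/(c*2) := by rw [div_div]
  rw [E1, E2]

lemma inst_high {a b : ℝ} (ha : 0 < a) (hb : 0 < b) (M c : ℝ) (hc : c ≠ 0) :
    (a*b) ^ ((1 - (M - c)/c)/2) * (b*b) ^ (((M - c)/c)/2)
      = a ^ (1 - M/(c*2)) * b ^ (M/(c*2)) := by
  rw [mul_rpow ha.le hb.le, mul_rpow hb.le hb.le]
  have hre : (a ^ ((1-(M-c)/c)/2) * b ^ ((1-(M-c)/c)/2)) * (b ^ (((M-c)/c)/2) * b ^ (((M-c)/c)/2))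
      = a ^ ((1-(M-c)/c)/2) * (b ^ ((1-(M-c)/c)/2) * b ^ (((M-c)/c)/2) * b ^ (((M-c)/c)/2)) := by
    ring
  rw [hre, ← rpow_add hb, ← rpow_add hb]
  have E2 : (1-(M-c)/c)/2 + ((M-c)/c)/2 + ((M-c)/c)/2 = M/(c*2) := by field_simp; ring
  have E1 : (1-(M-c)/c)/2 = 1 - M/(c*2) := by field_simp; ring
  rw [E2, E1]

lemma Fk_inst_low {a b ν : ℝ} (ha : 0 < a) (hb : 0 < b) (i : ℕ) :
    Fk (a*a) (a*b) (2*ν) i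
      = a ^ (1 - mfl ν (i+1) / 2^(i+1)) * b ^ (mfl ν (i+1) / 2^(i+1))
        - a ^ (1 - (mfl ν (i+1) + 1) / 2^(i+1)) * b ^ ((mfl ν (i+1) + 1) / 2^(i+1)) := by
  have hc : ((2:ℝ)^i) ≠ 0 := by positivity
  unfold Fk
  rw [mfl_low, inst_low ha hb _ _ hc, inst_low ha hb _ _ hc, ← pow_succ]

lemma Fk_inst_high {a b ν : ℝ} (ha : 0 < a) (hb : 0 < b) (i : ℕ) :
    Fk (a*b) (b*b) (2*ν-1) i
      = a ^ (1 - mfl ν (i+1) / 2^(i+1)) * b ^ (mfl ν (i+1) / 2^(i+1))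
        - a ^ (1 - (mfl ν (i+1) + 1) / 2^(i+1)) * b ^ ((mfl ν (i+1) + 1) / 2^(i+1)) := by
  have hc : ((2:ℝ)^i) ≠ 0 := by positivity
  unfold Fk
  rw [mfl_high]
  rw [show mfl ν (i+1) - 2^i + 1 = (mfl ν (i+1)+1) - (2:ℝ)^i from by ring]
  rw [inst_high ha hb (mfl ν (i+1)) _ hc, inst_high ha hb (mfl ν (i+1)+1) _ hc, ← pow_succ]

lemma geo_inst_low {a b ν : ℝ} (ha : 0 < a) (hb : 0 < b) :
    (a*a) ^ (1-2*ν) * (a*b) ^ (2*ν) = (a ^ (1-ν) * b ^ ν)^2 := by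
  rw [mul_rpow ha.le ha.le, mul_rpow ha.le hb.le]
  have hre : (a ^ (1-2*ν) * a ^ (1-2*ν)) * (a ^ (2*ν) * b ^ (2*ν))
      = (a ^ (1-2*ν) * a ^ (1-2*ν) * a ^ (2*ν)) * b ^ (2*ν) := by ring
  rw [hre, ← rpow_add ha, ← rpow_add ha]
  have hR : (a ^ (1-ν) * b ^ ν)^2 = a ^ ((1-ν)+(1-ν)) * b ^ (ν+ν) := by
    have hre2 : (a ^ (1-ν) * b ^ ν) * (a ^ (1-ν) * b ^ ν)
        = (a ^ (1-ν) * a ^ (1-ν)) * (b ^ ν * b ^ ν) := by ring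
    rw [pow_two, hre2, ← rpow_add ha, ← rpow_add hb]
  rw [hR, show (1-2*ν)+(1-2*ν)+2*ν = (1-ν)+(1-ν) from by ring,
    show (2*ν : ℝ) = ν+ν from by ring]

lemma geo_inst_high {a b ν : ℝ} (ha : 0 < a) (hb : 0 < b) :
    (a*b) ^ (1-(2*ν-1)) * (b*b) ^ (2*ν-1) = (a ^ (1-ν) * b ^ ν)^2 := by
  rw [mul_rpow ha.le hb.le, mul_rpow hb.le hb.le]
  have hre : (a ^ (1-(2*ν-1)) * b ^ (1-(2*ν-1))) * (b ^ (2*ν-1) * b ^ (2*ν-1))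
      = a ^ (1-(2*ν-1)) * (b ^ (1-(2*ν-1)) * b ^ (2*ν-1) * b ^ (2*ν-1)) := by ring
  rw [hre, ← rpow_add hb, ← rpow_add hb]
  have hR : (a ^ (1-ν) * b ^ ν)^2 = a ^ ((1-ν)+(1-ν)) * b ^ (ν+ν) := by
    have hre2 : (a ^ (1-ν) * b ^ ν) * (a ^ (1-ν) * b ^ ν)
        = (a ^ (1-ν) * a ^ (1-ν)) * (b ^ ν * b ^ ν) := by ring
    rw [pow_two, hre2, ← rpow_add ha, ← rpow_add hb]
  rw [hR, show (1-(2*ν-1)) = (1-ν)+(1-ν) from by ring,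
    show (1-ν)+(1-ν)+(2*ν-1)+(2*ν-1) = ν+ν from by ring]

theorem stmt10 (a b ν : ℝ) (ha : 0 < a) (hb : 0 < b) (hν : ν ∈ Set.Ioo (0:ℝ) 1)
    (n : ℕ) (hn : 1 ≤ n) (h : ℝ) (hh : h = b / a) :
    Kc (h ^ ((1:ℝ)/2^(n-1))) ^ rseq ν n * (a ^ (1 - ν) * b ^ ν)^2 ≤
      ((1 - ν) * a + ν * b)^2 - (min ν (1 - ν))^2 * (a - b)^2 - (∑ k ∈ Finset.Icc 1 (n-1), rseq ν k * (a ^ (1 - mfl ν k / 2^k) * b ^ (mfl ν k / 2^k) - a ^ (1 - (mfl ν k + 1) / 2^k) * b ^ ((mfl ν k + 1) / 2^k))^2) ∧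
    ((1 - ν) * a + ν * b)^2 - (min ν (1 - ν))^2 * (a - b)^2 - (∑ k ∈ Finset.Icc 1 (n-1), rseq ν k * (a ^ (1 - mfl ν k / 2^k) * b ^ (mfl ν k / 2^k) - a ^ (1 - (mfl ν k + 1) / 2^k) * b ^ ((mfl ν k + 1) / 2^k))^2) ≤
      Kc (h ^ ((1:ℝ)/2^(n-1))) ^ (1 - rseq ν n) * (a ^ (1 - ν) * b ^ ν)^2 := by
  obtain ⟨hν0, hν1⟩ := hν
  have hIcc : Finset.Icc 1 (n-1) = Finset.Ico 1 n := by
    rw [← Finset.Ico_add_one_right_eq_Icc]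
    congr 1
    omega
  rcases le_or_gt ν (1/2) with hc | hc
  · have H := main (n-1) (a*a) (a*b) (2*ν) (by positivity) (by positivity)
      (by linarith) (by linarith)
    have hsh := rseq_shift (rseq_one_low hν0.le hc)
    have hrn : rseq (2*ν) (n-1) = rseq ν n := by
      have h2 := hsh (n-1)
      rwa [Nat.sub_add_cancel hn] at h2
    have hK : (a*b)/(a*a) = h := by
      rw [hh, div_eq_div_iff (by positivity) (by positivity)]
      ring
    have hgeo := geo_inst_low (ν := ν) ha hb
    have hmid : (1-2*ν)*(a*a) + 2*ν*(a*b)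
          - ∑ k ∈ Finset.range (n-1), rseq (2*ν) k * (Fk (a*a) (a*b) (2*ν) k)^2
        = ((1 - ν) * a + ν * b)^2 - (min ν (1 - ν))^2 * (a - b)^2
          - (∑ k ∈ Finset.Icc 1 (n-1), rseq ν k * (a ^ (1 - mfl ν k / 2^k) * b ^ (mfl ν k / 2^k) - a ^ (1 - (mfl ν k + 1) / 2^k) * b ^ ((mfl ν k + 1) / 2^k))^2) := by
      rw [hIcc, Finset.sum_Ico_eq_sum_range]
      have hS : ∀ i ∈ Finset.range (n-1),
          rseq ν (1+i) * (a ^ (1 - mfl ν (1+i) / 2^(1+i)) * b ^ (mfl ν (1+i) / 2^(1+i))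
            - a ^ (1 - (mfl ν (1+i) + 1) / 2^(1+i)) * b ^ ((mfl ν (1+i) + 1) / 2^(1+i)))^2
          = rseq (2*ν) i * (Fk (a*a) (a*b) (2*ν) i)^2 := by
        intro i _
        rw [show 1+i = i+1 from Nat.add_comm 1 i, ← hsh i, Fk_inst_low ha hb i]
      rw [Finset.sum_congr rfl hS, min_eq_left (by linarith : ν ≤ 1 - ν)]
      ring
    rw [hK, hrn, hgeo, hmid] at H
    exact H
  · have H := main (n-1) (a*b) (b*b) (2*ν-1) (by positivity) (by positivity)
      (by linarith) (by linarith)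
    have hsh := rseq_shift (rseq_one_high hc.le hν1.le)
    have hrn : rseq (2*ν-1) (n-1) = rseq ν n := by
      have h2 := hsh (n-1)
      rwa [Nat.sub_add_cancel hn] at h2
    have hK : (b*b)/(a*b) = h := by
      rw [hh, div_eq_div_iff (by positivity) (by positivity)]
      ring
    have hgeo := geo_inst_high (ν := ν) ha hb
    have hmid : (1-(2*ν-1))*(a*b) + (2*ν-1)*(b*b)
          - ∑ k ∈ Finset.range (n-1), rseq (2*ν-1) k * (Fk (a*b) (b*b) (2*ν-1) k)^2
        = ((1 - ν) * a + ν * b)^2 - (min ν (1 - ν))^2 * (a - b)^2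
          - (∑ k ∈ Finset.Icc 1 (n-1), rseq ν k * (a ^ (1 - mfl ν k / 2^k) * b ^ (mfl ν k / 2^k) - a ^ (1 - (mfl ν k + 1) / 2^k) * b ^ ((mfl ν k + 1) / 2^k))^2) := by
      rw [hIcc, Finset.sum_Ico_eq_sum_range]
      have hS : ∀ i ∈ Finset.range (n-1),
          rseq ν (1+i) * (a ^ (1 - mfl ν (1+i) / 2^(1+i)) * b ^ (mfl ν (1+i) / 2^(1+i))
            - a ^ (1 - (mfl ν (1+i) + 1) / 2^(1+i)) * b ^ ((mfl ν (1+i) + 1) / 2^(1+i)))^2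
          = rseq (2*ν-1) i * (Fk (a*b) (b*b) (2*ν-1) i)^2 := by
        intro i _
        rw [show 1+i = i+1 from Nat.add_comm 1 i, ← hsh i, Fk_inst_high ha hb i]
      rw [Finset.sum_congr rfl hS, min_eq_right (by linarith : 1 - ν ≤ ν)]
      ring
    rw [hK, hrn, hgeo, hmid] at H
    exact H
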